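/- For fixed δ ∈ [0,1], letting ε = (1-δ)/N, the sum e^{-1} + Σ_{ℓ=1}^{N} (e^{-1}/ℓ!) ∏_{ℓ'=1}^{ℓ} (1 - (ℓ'-1)ε - δ)/(1 - (ℓ'-1)ε) converges to e^{-δ} as N → ∞. -/

import Mathlib

open Real Filter Topology

private noncomputable def auxTerm (δ : ℝ) (N ℓ : ℕ) : ℝ :=
  (Real.exp (-1) / (Nat.factorial ℓ : ℝ)) *
    ∏ ℓ' ∈ Finset.Icc 1 ℓ,
      (1 - ((ℓ' : ℝ) - 1) * ((1 - δ) / N) - δ) /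
        (1 - ((ℓ' : ℝ) - 1) * ((1 - δ) / N))

private noncomputable def auxF (δ : ℝ) (N ℓ : ℕ) : ℝ :=
  if ℓ ∈ Finset.Icc 1 N then auxTerm δ N ℓ else 0

private noncomputable def auxG (δ : ℝ) (ℓ : ℕ) : ℝ :=
  if 1 ≤ ℓ then Real.exp (-1) * ((1 - δ) ^ ℓ / (Nat.factorial ℓ : ℝ)) else 0

private lemma ratio_bounds (δ : ℝ) (hδ0 : 0 ≤ δ) (hδ1 : δ ≤ 1) {N ℓ' : ℕ}
    (h1 : 1 ≤ ℓ') (h2 : ℓ' ≤ N) :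
    0 ≤ (1 - ((ℓ' : ℝ) - 1) * ((1 - δ) / N) - δ) /
        (1 - ((ℓ' : ℝ) - 1) * ((1 - δ) / N)) ∧
    (1 - ((ℓ' : ℝ) - 1) * ((1 - δ) / N) - δ) /
        (1 - ((ℓ' : ℝ) - 1) * ((1 - δ) / N)) ≤ 1 := by
  have hN0 : (0:ℝ) < N := by
    have : 1 ≤ N := le_trans h1 h2
    exact_mod_cast Nat.pos_of_ne_zero (by omega)
  have hl1 : (1:ℝ) ≤ (ℓ' : ℝ) := by exact_mod_cast h1
  have hlN : (ℓ' : ℝ) ≤ (N : ℝ) := by exact_mod_cast h2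
  have hu : (0:ℝ) < (N:ℝ)⁻¹ := inv_pos.mpr hN0
  have hNu : (N:ℝ) * (N:ℝ)⁻¹ = 1 := mul_inv_cancel₀ (ne_of_gt hN0)
  have hdiv : (1 - δ) / (N:ℝ) = (1 - δ) * (N:ℝ)⁻¹ := div_eq_mul_inv _ _
  have hau0 : 0 ≤ ((ℓ':ℝ) - 1) * (N:ℝ)⁻¹ := mul_nonneg (by linarith) hu.le
  have h1u : ((ℓ':ℝ) - 1) * (N:ℝ)⁻¹ ≤ 1 - (N:ℝ)⁻¹ := by nlinarith
  have hD : 0 < 1 - ((ℓ':ℝ) - 1) * ((1 - δ) / N) := by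
    rw [hdiv]; nlinarith [mul_nonneg hδ0 hau0]
  have hnum : 0 ≤ 1 - ((ℓ':ℝ) - 1) * ((1 - δ) / N) - δ := by
    rw [hdiv]
    nlinarith [mul_nonneg (by linarith : (0:ℝ) ≤ 1 - δ)
      (by linarith : (0:ℝ) ≤ 1 - ((ℓ':ℝ) - 1) * (N:ℝ)⁻¹)]
  constructor
  · exact div_nonneg hnum hD.le
  · rw [div_le_one hD]; linarith

theorem stmt_19 (δ : ℝ) (hδ : δ ∈ Set.Icc (0:ℝ) 1) :
    Tendsto (fun N : ℕ =>
      Real.exp (-1) + ∑ ℓ ∈ Finset.Icc 1 N,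
        (Real.exp (-1) / (Nat.factorial ℓ : ℝ)) *
          ∏ ℓ' ∈ Finset.Icc 1 ℓ,
            (1 - ((ℓ' : ℝ) - 1) * ((1 - δ) / N) - δ) /
              (1 - ((ℓ' : ℝ) - 1) * ((1 - δ) / N)))
      atTop (nhds (Real.exp (-δ))) := by
  obtain ⟨hδ0, hδ1⟩ := hδ
  -- summable bound
  have hbound_summable : Summable (fun ℓ : ℕ => Real.exp (-1) * ((1:ℝ) ^ ℓ / (Nat.factorial ℓ : ℝ))) :=
    (Real.summable_pow_div_factorial 1).mul_left _
  -- pointwise convergence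
  have hratio : ∀ ℓ' : ℕ, Tendsto (fun N : ℕ =>
      (1 - ((ℓ' : ℝ) - 1) * ((1 - δ) / N) - δ) /
        (1 - ((ℓ' : ℝ) - 1) * ((1 - δ) / N))) atTop (𝓝 (1 - δ)) := by
    intro ℓ'
    have h0 : Tendsto (fun N : ℕ => ((ℓ' : ℝ) - 1) * ((1 - δ) / N)) atTop (𝓝 0) := by
      have := (tendsto_const_div_atTop_nhds_zero_nat (1 - δ)).const_mul ((ℓ' : ℝ) - 1)
      simpa using this
    have hnum : Tendsto (fun N : ℕ => 1 - ((ℓ' : ℝ) - 1) * ((1 - δ) / N) - δ)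
        atTop (𝓝 (1 - δ)) := by
      have := ((tendsto_const_nhds (x := (1:ℝ)) (f := atTop)).sub h0).sub
        (tendsto_const_nhds (x := δ))
      simpa using this
    have hden : Tendsto (fun N : ℕ => 1 - ((ℓ' : ℝ) - 1) * ((1 - δ) / N)) atTop (𝓝 1) := by
      have := (tendsto_const_nhds (x := (1:ℝ)) (f := atTop)).sub h0
      simpa using this
    have h := hnum.div hden one_ne_zero
    rw [div_one] at h
    exact h
  have hpt : ∀ ℓ : ℕ, Tendsto (fun N : ℕ => auxF δ N ℓ) atTop (𝓝 (auxG δ ℓ)) := by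
    intro ℓ
    rcases Nat.eq_zero_or_pos ℓ with h | h
    · subst h
      have : (fun N : ℕ => auxF δ N 0) = fun _ => 0 := by
        funext N; simp [auxF]
      rw [this]
      simp [auxG]
    · have hprod : Tendsto (fun N : ℕ => ∏ ℓ' ∈ Finset.Icc 1 ℓ,
          (1 - ((ℓ' : ℝ) - 1) * ((1 - δ) / N) - δ) /
            (1 - ((ℓ' : ℝ) - 1) * ((1 - δ) / N))) atTop (𝓝 ((1 - δ) ^ ℓ)) := by
        have := tendsto_finset_prod (Finset.Icc 1 ℓ)
          (fun ℓ' _ => hratio ℓ')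
        simpa [Finset.prod_const, Nat.card_Icc] using this
      have hterm : Tendsto (fun N : ℕ => auxTerm δ N ℓ) atTop
          (𝓝 (Real.exp (-1) * ((1 - δ) ^ ℓ / (Nat.factorial ℓ : ℝ)))) := by
        have := hprod.const_mul (Real.exp (-1) / (Nat.factorial ℓ : ℝ))
        have heq : Real.exp (-1) / (Nat.factorial ℓ : ℝ) * (1 - δ) ^ ℓ
            = Real.exp (-1) * ((1 - δ) ^ ℓ / (Nat.factorial ℓ : ℝ)) := by ring
        rw [heq] at this
        exact this
      have hev : (fun N : ℕ => auxTerm δ N ℓ) =ᶠ[atTop] fun N : ℕ => auxF δ N ℓ := by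
        filter_upwards [eventually_ge_atTop ℓ] with N hN
        rw [auxF, if_pos (Finset.mem_Icc.mpr ⟨h, hN⟩)]
      have : auxG δ ℓ = Real.exp (-1) * ((1 - δ) ^ ℓ / (Nat.factorial ℓ : ℝ)) := by
        rw [auxG, if_pos (show 1 ≤ ℓ from h)]
      rw [this]
      exact hterm.congr' hev
  -- bound
  have hbd : ∀ N : ℕ, ∀ ℓ : ℕ, ‖auxF δ N ℓ‖ ≤ Real.exp (-1) * ((1:ℝ) ^ ℓ / (Nat.factorial ℓ : ℝ)) := by
    intro N ℓ
    rw [one_pow]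
    by_cases h : ℓ ∈ Finset.Icc 1 N
    · obtain ⟨h1, h2⟩ := Finset.mem_Icc.mp h
      have hfac : (0:ℝ) < (Nat.factorial ℓ : ℝ) := by exact_mod_cast Nat.factorial_pos ℓ
      have hP0 : 0 ≤ ∏ ℓ' ∈ Finset.Icc 1 ℓ,
          (1 - ((ℓ' : ℝ) - 1) * ((1 - δ) / N) - δ) /
            (1 - ((ℓ' : ℝ) - 1) * ((1 - δ) / N)) :=
        Finset.prod_nonneg fun ℓ' hℓ' => by
          obtain ⟨hl1, hl2⟩ := Finset.mem_Icc.mp hℓ'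
          exact (ratio_bounds δ hδ0 hδ1 hl1 (le_trans hl2 h2)).1
      have hP1 : (∏ ℓ' ∈ Finset.Icc 1 ℓ,
          (1 - ((ℓ' : ℝ) - 1) * ((1 - δ) / N) - δ) /
            (1 - ((ℓ' : ℝ) - 1) * ((1 - δ) / N))) ≤ 1 :=
        Finset.prod_le_one
          (fun ℓ' hℓ' => by
            obtain ⟨hl1, hl2⟩ := Finset.mem_Icc.mp hℓ'
            exact (ratio_bounds δ hδ0 hδ1 hl1 (le_trans hl2 h2)).1)
          (fun ℓ' hℓ' => by
            obtain ⟨hl1, hl2⟩ := Finset.mem_Icc.mp hℓ'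
            exact (ratio_bounds δ hδ0 hδ1 hl1 (le_trans hl2 h2)).2)
      have hc : 0 < Real.exp (-1) / (Nat.factorial ℓ : ℝ) :=
        div_pos (Real.exp_pos _) hfac
      rw [auxF, if_pos h, auxTerm, Real.norm_eq_abs, abs_of_nonneg (mul_nonneg hc.le hP0)]
      calc Real.exp (-1) / (Nat.factorial ℓ : ℝ) * _
          ≤ Real.exp (-1) / (Nat.factorial ℓ : ℝ) * 1 := by
            exact mul_le_mul_of_nonneg_left hP1 hc.le
        _ = Real.exp (-1) * (1 / (Nat.factorial ℓ : ℝ)) := by ring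
    · rw [auxF, if_neg h]
      simp
      positivity
  -- dominated convergence
  have key : Tendsto (fun N : ℕ => ∑' ℓ : ℕ, auxF δ N ℓ) atTop (𝓝 (∑' ℓ : ℕ, auxG δ ℓ)) :=
    tendsto_tsum_of_dominated_convergence hbound_summable hpt
      (Filter.Eventually.of_forall hbd)
  -- rewrite the finite sum as a tsum
  have hsum_eq : ∀ N : ℕ, (∑ ℓ ∈ Finset.Icc 1 N,
      (Real.exp (-1) / (Nat.factorial ℓ : ℝ)) *
        ∏ ℓ' ∈ Finset.Icc 1 ℓ,
          (1 - ((ℓ' : ℝ) - 1) * ((1 - δ) / N) - δ) /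
            (1 - ((ℓ' : ℝ) - 1) * ((1 - δ) / N)))
      = ∑' ℓ : ℕ, auxF δ N ℓ := by
    intro N
    rw [tsum_eq_sum (s := Finset.Icc 1 N) (fun b hb => by rw [auxF, if_neg hb])]
    exact Finset.sum_congr rfl fun b hb => by rw [auxF, if_pos hb, auxTerm]
  -- compute the tsum of auxG
  have hG : Summable (fun ℓ : ℕ => Real.exp (-1) * ((1 - δ) ^ ℓ / (Nat.factorial ℓ : ℝ))) :=
    (Real.summable_pow_div_factorial (1 - δ)).mul_left _
  have hG' : Summable (fun n : ℕ =>
      Real.exp (-1) * ((1 - δ) ^ (n + 1) / (Nat.factorial (n + 1) : ℝ))) :=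
    (summable_nat_add_iff 1).mpr hG
  have hshift : (fun n : ℕ => auxG δ (n + 1)) = fun n : ℕ =>
      Real.exp (-1) * ((1 - δ) ^ (n + 1) / (Nat.factorial (n + 1) : ℝ)) := by
    funext n; simp [auxG]
  have hGsummable : Summable (auxG δ) := by
    apply (summable_nat_add_iff 1).mp
    rw [hshift]; exact hG'
  have hGval : ∑' ℓ : ℕ, (1 - δ) ^ ℓ / (Nat.factorial ℓ : ℝ) = Real.exp (1 - δ) := by
    rw [Real.exp_eq_exp_ℝ, NormedSpace.exp_eq_tsum_div]
  have htsumG : ∑' ℓ : ℕ, Real.exp (-1) * ((1 - δ) ^ ℓ / (Nat.factorial ℓ : ℝ))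
      = Real.exp (-1) * Real.exp (1 - δ) := by
    rw [tsum_mul_left, hGval]
  have htsum_auxG : ∑' ℓ : ℕ, auxG δ ℓ = Real.exp (-1) * Real.exp (1 - δ) - Real.exp (-1) := by
    rw [hGsummable.tsum_eq_zero_add]
    rw [hG.tsum_eq_zero_add] at htsumG
    simp only [auxG, Nat.not_succ_le_zero, if_neg] at *
    rw [hshift]
    simp at htsumG ⊢
    linarith
  -- conclude
  have final : Tendsto (fun N : ℕ => Real.exp (-1) + ∑' ℓ : ℕ, auxF δ N ℓ) atTop
      (𝓝 (Real.exp (-1) + ∑' ℓ : ℕ, auxG δ ℓ)) := key.const_add _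
  have hval : Real.exp (-1) + ∑' ℓ : ℕ, auxG δ ℓ = Real.exp (-δ) := by
    rw [htsum_auxG, ← Real.exp_add]
    ring_nf
  rw [hval] at final
  refine final.congr fun N => ?_
  rw [hsum_eq N]
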